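/- Let X be a nonempty convex subset of a topological vector space E and Y a nonempty subset of a topological vector space F. If a correspondence T : X → 2^Y has nonempty values and convex graph, then T is weakly naturally quasi-concave. -/

import Mathlib

/-- A correspondence `T : X → 2^Y` is *weakly naturally quasi-concave* (WNQ). -/
def IsWNQ {E F : Type*} [AddCommMonoid E] [Module ℝ E]
    [AddCommMonoid F] [Module ℝ F] (X : Set E) (T : E → Set F) : Prop :=
  ∀ (n : ℕ) (x : Fin n → E), (∀ i, x i ∈ X) →
    ∃ (y : Fin n → F) (g : Fin n → ℝ → ℝ),
      (∀ i, y i ∈ T (x i)) ∧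
      (∀ i, Continuous (g i)) ∧
      (∀ i, g i 1 = 1) ∧
      (∀ i, g i 0 = 0) ∧
      ∀ lam ∈ stdSimplex ℝ (Fin n),
        (fun i => g i (lam i)) ∈ stdSimplex ℝ (Fin n) ∧
        ∑ i, g i (lam i) • y i ∈ T (∑ i, lam i • x i)

/-- A correspondence `T : X → 2^Y` with nonempty values and convex graph
`Gr(T) = {(x, y) : x ∈ X, y ∈ T x}` is weakly naturally quasi-concave. -/
theorem isWNQ_of_convex_graph
    {E F : Type*}
    [AddCommGroup E] [Module ℝ E] [TopologicalSpace E]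
    [IsTopologicalAddGroup E] [ContinuousSMul ℝ E]
    [AddCommGroup F] [Module ℝ F] [TopologicalSpace F]
    [IsTopologicalAddGroup F] [ContinuousSMul ℝ F]
    (X : Set E) (hXne : X.Nonempty) (hXconv : Convex ℝ X)
    (Y : Set F) (hYne : Y.Nonempty)
    (T : E → Set F) (hTY : ∀ x ∈ X, T x ⊆ Y)
    (hTne : ∀ x ∈ X, (T x).Nonempty)
    (hgraph : Convex ℝ {p : E × F | p.1 ∈ X ∧ p.2 ∈ T p.1}) :
    IsWNQ X T := by
  intro n x hx
  choose y hy using fun i => hTne (x i) (hx i)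
  refine ⟨y, fun _ t => t, hy, fun _ => continuous_id, fun _ => rfl, fun _ => rfl,
    fun lam hlam => ⟨hlam, ?_⟩⟩
  have := hgraph.sum_mem (fun i (_ : i ∈ Finset.univ) => hlam.1 i) hlam.2
    (fun i _ => show ((x i, y i) : E × F) ∈ _ from ⟨hx i, hy i⟩)
  have hsum : (∑ i, lam i • (x i, y i)) = (∑ i, lam i • x i, ∑ i, lam i • y i) := by
    simp [Prod.ext_iff, Prod.smul_def, Prod.fst_sum, Prod.snd_sum]
  rw [hsum] at this
  exact this.2
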